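/- Lemma 1: for every formula φ of the language, the closure cl(φ) is a finite set of formulas. -/

import Mathlib

namespace ALPC

/-- A chain of belief for awareness: a nonempty finite sequence of agents. -/
def Chain (G : Type) : Type := {l : List G // l ≠ []}

/-- The last agent of a chain. -/
def Chain.last {G : Type} (θ : Chain G) : G := θ.val.getLast θ.prop

/-- Concatenation of chains. -/
def Chain.append {G : Type} (θ θ' : Chain G) : Chain G :=
  ⟨θ.val ++ θ'.val, by cases θ; cases θ'; simp_all⟩

/-- The order ⪯ on chains: the partial order generated by the conditions that
θ ⪯ θ·θ'' and that a chain with two adjacent occurrences of the same agent is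
equivalent (related in both directions) to the chain with one of them removed. -/
inductive ChainLE {G : Type} : Chain G → Chain G → Prop
  | refl (θ : Chain G) : ChainLE θ θ
  | ext (θ θ'' : Chain G) : ChainLE θ (θ.append θ'')
  | dup_le (pre suf : List G) (a : G) :
      ChainLE ⟨pre ++ a :: a :: suf, by simp⟩ ⟨pre ++ a :: suf, by simp⟩
  | dup_ge (pre suf : List G) (a : G) :
      ChainLE ⟨pre ++ a :: suf, by simp⟩ ⟨pre ++ a :: a :: suf, by simp⟩
  | trans {θ₁ θ₂ θ₃ : Chain G} : ChainLE θ₁ θ₂ → ChainLE θ₂ θ₃ → ChainLE θ₁ θ₃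

/-- Formulas of the language: atoms, negation, conjunction, implicit knowledge I_i,
the operator [≈]_θ (`box`), the operator C_θ, awareness A_θ and explicit knowledge E_θ. -/
inductive Formula (P G : Type) : Type
  | atom : P → Formula P G
  | neg : Formula P G → Formula P G
  | and : Formula P G → Formula P G → Formula P G
  | K : G → Formula P G → Formula P G
  | box : Chain G → Formula P G → Formula P G
  | C : Chain G → Formula P G → Formula P G
  | A : Chain G → Formula P G → Formula P G
  | E : Chain G → Formula P G → Formula P G

variable {P G : Type}

/-- Material implication, defined from ¬ and ∧. -/
def Formula.imp (φ ψ : Formula P G) : Formula P G := (φ.and ψ.neg).neg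

/-- Biconditional. -/
def Formula.iff (φ ψ : Formula P G) : Formula P G := (φ.imp ψ).and (ψ.imp φ)

/-- At(φ): the set of atomic propositions occurring in φ. -/
def Formula.At : Formula P G → Set P
  | .atom p => {p}
  | .neg φ => φ.At
  | .and φ ψ => φ.At ∪ ψ.At
  | .K _ φ => φ.At
  | .box _ φ => φ.At
  | .C _ φ => φ.At
  | .A _ φ => φ.At
  | .E _ φ => φ.At

/-- The set of chains occurring as operator subscripts in a formula. -/
def Formula.chains : Formula P G → Set (Chain G)
  | .atom _ => ∅
  | .neg φ => φ.chains
  | .and φ ψ => φ.chains ∪ ψ.chains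
  | .K _ φ => φ.chains
  | .box θ φ => insert θ φ.chains
  | .C θ φ => insert θ φ.chains
  | .A θ φ => insert θ φ.chains
  | .E θ φ => insert θ φ.chains

/-- Well-formedness: φ belongs to the language 𝓛_(P,G,Θ); every operator subscript
is a chain in Θ, and in A_θ φ and E_θ φ every operator subscript θ' occurring in φ
satisfies θ ⪯ θ'. -/
def WF (Θ : Set (Chain G)) : Formula P G → Prop
  | .atom _ => True
  | .neg φ => WF Θ φ
  | .and φ ψ => WF Θ φ ∧ WF Θ ψ
  | .K _ φ => WF Θ φ
  | .box θ φ => θ ∈ Θ ∧ WF Θ φ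
  | .C θ φ => θ ∈ Θ ∧ WF Θ φ
  | .A θ φ => θ ∈ Θ ∧ WF Θ φ ∧ ∀ θ' ∈ φ.chains, ChainLE θ θ'
  | .E θ φ => θ ∈ Θ ∧ WF Θ φ ∧ ∀ θ' ∈ φ.chains, ChainLE θ θ'

/-- The raw data of a Kripke-style model for the language. -/
structure RawModel (P G : Type) where
  W : Type
  sim : G → W → W → Prop
  V : P → Set W
  Aw : Chain G → Set P

/-- The indistinguishable relation ≈_θ induced by the awareness set 𝒜_θ. -/
def RawModel.indist (M : RawModel P G) (θ : Chain G) (w v : M.W) : Prop :=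
  ∀ p ∈ M.Aw θ, (w ∈ M.V p ↔ v ∈ M.V p)

/-- The transitive closure of ∼_i ∘ ≈_θ (i the last agent of θ), where
(x,y) ∈ ∼_i ∘ ≈_θ iff there is u with x ≈_θ u and u ∼_i y. -/
def RawModel.creach (M : RawModel P G) (θ : Chain G) : M.W → M.W → Prop :=
  Relation.TransGen (fun x y => ∃ u, M.indist θ x u ∧ M.sim θ.last u y)

/-- The satisfaction relation M,w ⊨ φ. -/
def Sat (M : RawModel P G) : Formula P G → M.W → Prop
  | .atom p, w => w ∈ M.V p
  | .neg φ, w => ¬ Sat M φ w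
  | .and φ ψ, w => Sat M φ w ∧ Sat M ψ w
  | .K i φ, w => ∀ v, M.sim i w v → Sat M φ v
  | .box θ φ, w => ∀ v, M.indist θ w v → Sat M φ v
  | .C θ φ, w => ∀ v, M.creach θ w v → Sat M φ v
  | .A θ φ, _ => Formula.At φ ⊆ M.Aw θ
  | .E θ φ, w => Formula.At φ ⊆ M.Aw θ ∧ ∀ v, M.creach θ w v → Sat M φ v

/-- An epistemic model with awareness: a nonempty set of worlds, equivalence
relations ∼_i, a valuation, and nonempty awareness sets 𝒜_θ (θ ∈ Θ) with
𝒜_θ ⊆ 𝒜_θ' whenever θ' ⪯ θ. -/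
structure AwModel (P G : Type) (Θ : Set (Chain G)) extends RawModel P G where
  W_ne : Nonempty W
  sim_equiv : ∀ i : G, Equivalence (sim i)
  Aw_ne : ∀ θ ∈ Θ, (Aw θ).Nonempty
  Aw_mono : ∀ θ ∈ Θ, ∀ θ' ∈ Θ, ChainLE θ' θ → Aw θ ⊆ Aw θ'

/-- Validity: φ holds at every world of every epistemic model with awareness. -/
def Valid (Θ : Set (Chain G)) (φ : Formula P G) : Prop :=
  ∀ M : AwModel P G Θ, ∀ w : M.W, Sat M.toRawModel φ w


/-- Conjunction of a nonempty list of formulas, given as head and tail. -/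
def conjList (f : Formula P G) : List (Formula P G) → Formula P G
  | [] => f
  | g :: l => f.and (conjList g l)

/-- Boolean evaluation of the propositional skeleton of a formula, treating
non-Boolean formulas as propositional atoms. -/
def propEval (v : Formula P G → Bool) : Formula P G → Bool
  | .neg φ => !(propEval v φ)
  | .and φ ψ => propEval v φ && propEval v ψ
  | φ => v φ

/-- φ is a propositional tautology. -/
def Tautology (φ : Formula P G) : Prop := ∀ v, propEval v φ = true

/-- The Hilbert system ALPC. -/
inductive Provable (Θ : Set (Chain G)) : Formula P G → Prop
  | taut {φ : Formula P G} : Tautology φ → WF Θ φ → Provable Θ φ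
  | AN {θ : Chain G} {φ : Formula P G} :
      WF Θ ((Formula.A θ φ).iff (Formula.A θ φ.neg)) →
      Provable Θ ((Formula.A θ φ).iff (Formula.A θ φ.neg))
  | ACN {θ : Chain G} {φ ψ : Formula P G} :
      WF Θ ((Formula.A θ (φ.and ψ)).iff ((Formula.A θ φ).and (Formula.A θ ψ))) →
      Provable Θ ((Formula.A θ (φ.and ψ)).iff ((Formula.A θ φ).and (Formula.A θ ψ)))
  | AA {θ θ' : Chain G} {φ : Formula P G} :
      WF Θ ((Formula.A θ φ).iff (Formula.A θ (Formula.A θ' φ))) →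
      Provable Θ ((Formula.A θ φ).iff (Formula.A θ (Formula.A θ' φ)))
  | AL {θ : Chain G} {i : G} {φ : Formula P G} :
      WF Θ ((Formula.A θ φ).iff (Formula.A θ (Formula.K i φ))) →
      Provable Θ ((Formula.A θ φ).iff (Formula.A θ (Formula.K i φ)))
  | Abox {θ θ' : Chain G} {φ : Formula P G} :
      WF Θ ((Formula.A θ φ).iff (Formula.A θ (Formula.box θ' φ))) →
      Provable Θ ((Formula.A θ φ).iff (Formula.A θ (Formula.box θ' φ)))
  | ACM {θ θ' : Chain G} {φ : Formula P G} :
      WF Θ ((Formula.A θ φ).iff (Formula.A θ (Formula.C θ' φ))) →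
      Provable Θ ((Formula.A θ φ).iff (Formula.A θ (Formula.C θ' φ)))
  | AK {θ θ' : Chain G} {φ : Formula P G} :
      WF Θ ((Formula.A θ φ).iff (Formula.A θ (Formula.E θ' φ))) →
      Provable Θ ((Formula.A θ φ).iff (Formula.A θ (Formula.E θ' φ)))
  | ANbox {θ : Chain G} {p : P} :
      WF Θ (((Formula.A θ (Formula.atom p)).and (Formula.atom p)).imp
        (Formula.box θ (Formula.atom p))) →
      Provable Θ (((Formula.A θ (Formula.atom p)).and (Formula.atom p)).imp
        (Formula.box θ (Formula.atom p)))
  | AI {θ θ' : Chain G} {φ : Formula P G} :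
      ChainLE θ' θ →
      WF Θ ((Formula.A θ φ).imp (Formula.A θ' φ)) →
      Provable Θ ((Formula.A θ φ).imp (Formula.A θ' φ))
  | KA {θ : Chain G} {φ : Formula P G} (θ₀ : Chain G) (l : List (Chain G)) :
      (∀ x, x ∈ θ₀ :: l ↔ x ∈ Θ) →
      WF Θ (Formula.A θ φ) →
      Provable Θ ((Formula.A θ φ).imp
        (conjList (Formula.C θ₀ (Formula.A θ φ))
          (l.map fun θ' => Formula.C θ' (Formula.A θ φ))))
  | NKA {θ : Chain G} {φ : Formula P G} (θ₀ : Chain G) (l : List (Chain G)) :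
      (∀ x, x ∈ θ₀ :: l ↔ x ∈ Θ) →
      WF Θ (Formula.A θ φ) →
      Provable Θ (((Formula.A θ φ).neg).imp
        (conjList (Formula.C θ₀ ((Formula.A θ φ).neg))
          (l.map fun θ' => Formula.C θ' ((Formula.A θ φ).neg))))
  | K_I {i : G} {φ ψ : Formula P G} :
      WF Θ ((Formula.K i (φ.imp ψ)).imp ((Formula.K i φ).imp (Formula.K i ψ))) →
      Provable Θ ((Formula.K i (φ.imp ψ)).imp ((Formula.K i φ).imp (Formula.K i ψ)))
  | T_I {i : G} {φ : Formula P G} :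
      WF Θ ((Formula.K i φ).imp φ) →
      Provable Θ ((Formula.K i φ).imp φ)
  | five_I {i : G} {φ : Formula P G} :
      WF Θ (((Formula.K i φ).neg).imp (Formula.K i ((Formula.K i φ).neg))) →
      Provable Θ (((Formula.K i φ).neg).imp (Formula.K i ((Formula.K i φ).neg)))
  | K_box {θ : Chain G} {φ ψ : Formula P G} :
      WF Θ ((Formula.box θ (φ.imp ψ)).imp ((Formula.box θ φ).imp (Formula.box θ ψ))) →
      Provable Θ ((Formula.box θ (φ.imp ψ)).imp ((Formula.box θ φ).imp (Formula.box θ ψ)))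
  | T_box {θ : Chain G} {φ : Formula P G} :
      WF Θ ((Formula.box θ φ).imp φ) →
      Provable Θ ((Formula.box θ φ).imp φ)
  | five_box {θ : Chain G} {φ : Formula P G} :
      WF Θ (((Formula.box θ φ).neg).imp (Formula.box θ ((Formula.box θ φ).neg))) →
      Provable Θ (((Formula.box θ φ).neg).imp (Formula.box θ ((Formula.box θ φ).neg)))
  | K_C {θ : Chain G} {φ ψ : Formula P G} :
      WF Θ ((Formula.C θ (φ.imp ψ)).imp ((Formula.C θ φ).imp (Formula.C θ ψ))) →
      Provable Θ ((Formula.C θ (φ.imp ψ)).imp ((Formula.C θ φ).imp (Formula.C θ ψ)))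
  | MIX {θ : Chain G} {φ : Formula P G} :
      WF Θ ((Formula.C θ φ).imp
        (φ.and (Formula.box θ (Formula.K (Chain.last θ) (Formula.C θ φ))))) →
      Provable Θ ((Formula.C θ φ).imp
        (φ.and (Formula.box θ (Formula.K (Chain.last θ) (Formula.C θ φ)))))
  | IND {θ : Chain G} {φ : Formula P G} :
      WF Θ ((Formula.C θ (φ.imp (Formula.box θ (Formula.K (Chain.last θ) φ)))).imp
        (φ.imp (Formula.C θ φ))) →
      Provable Θ ((Formula.C θ (φ.imp (Formula.box θ (Formula.K (Chain.last θ) φ)))).imp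
        (φ.imp (Formula.C θ φ)))
  | KAC {θ : Chain G} {φ : Formula P G} :
      WF Θ ((Formula.E θ φ).iff ((Formula.A θ φ).and (Formula.C θ φ))) →
      Provable Θ ((Formula.E θ φ).iff ((Formula.A θ φ).and (Formula.C θ φ)))
  | mp {φ ψ : Formula P G} : Provable Θ (φ.imp ψ) → Provable Θ φ → Provable Θ ψ
  | necK {i : G} {φ : Formula P G} : Provable Θ φ → Provable Θ (Formula.K i φ)
  | necBox {θ : Chain G} {φ : Formula P G} : θ ∈ Θ → Provable Θ φ → Provable Θ (Formula.box θ φ)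
  | necC {θ : Chain G} {φ : Formula P G} : θ ∈ Θ → Provable Θ φ → Provable Θ (Formula.C θ φ)

/-- Γ ⊢ φ: there is a finite subset Γ' of Γ with ⊢ ⋀Γ' → φ. -/
def Deduces (Θ : Set (Chain G)) (Γ : Set (Formula P G)) (φ : Formula P G) : Prop :=
  Provable Θ φ ∨ ∃ (ψ : Formula P G) (l : List (Formula P G)),
    ψ ∈ Γ ∧ (∀ χ ∈ l, χ ∈ Γ) ∧ Provable Θ ((conjList ψ l).imp φ)

/-- Γ ⊢ ⊥: Γ deduces a contradiction. -/
def Inconsistent (Θ : Set (Chain G)) (Γ : Set (Formula P G)) : Prop :=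
  ∃ χ, Deduces Θ Γ χ ∧ Deduces Θ Γ χ.neg

/-- Γ is a consistent set in Φ. -/
def ConsistentIn (Θ : Set (Chain G)) (Φ Γ : Set (Formula P G)) : Prop :=
  Γ ⊆ Φ ∧ ¬ Inconsistent Θ Γ

/-- Γ is a maximal consistent set in Φ: no consistent set in Φ properly contains Γ. -/
def MCSIn (Θ : Set (Chain G)) (Φ Γ : Set (Formula P G)) : Prop :=
  ConsistentIn Θ Φ Γ ∧ ∀ Δ, ConsistentIn Θ Φ Δ → Γ ⊆ Δ → Δ = Γ

/-- Subformula relation: `Subf χ φ` means χ is a subformula of φ. -/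
inductive Subf : Formula P G → Formula P G → Prop
  | refl (φ : Formula P G) : Subf φ φ
  | neg {χ φ : Formula P G} : Subf χ φ → Subf χ (Formula.neg φ)
  | andL {χ φ ψ : Formula P G} : Subf χ φ → Subf χ (Formula.and φ ψ)
  | andR {χ φ ψ : Formula P G} : Subf χ ψ → Subf χ (Formula.and φ ψ)
  | K {χ φ : Formula P G} {i : G} : Subf χ φ → Subf χ (Formula.K i φ)
  | box {χ φ : Formula P G} {θ : Chain G} : Subf χ φ → Subf χ (Formula.box θ φ)
  | C {χ φ : Formula P G} {θ : Chain G} : Subf χ φ → Subf χ (Formula.C θ φ)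
  | A {χ φ : Formula P G} {θ : Chain G} : Subf χ φ → Subf χ (Formula.A θ φ)
  | E {χ φ : Formula P G} {θ : Chain G} : Subf χ φ → Subf χ (Formula.E θ φ)

/-- φ has the form of a negation. -/
def Formula.isNeg : Formula P G → Prop
  | .neg _ => True
  | _ => False

/-- The closure cl(φ), as an inductively generated (hence smallest) set. -/
inductive InCl (Θ : Set (Chain G)) (φ : Formula P G) : Formula P G → Prop
  | self : InCl Θ φ φ
  | sub {ψ χ : Formula P G} : InCl Θ φ ψ → Subf χ ψ → InCl Θ φ χ
  | neg {ψ : Formula P G} : InCl Θ φ ψ → ¬ Formula.isNeg ψ → InCl Θ φ (Formula.neg ψ)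
  | CA {θ : Chain G} {ψ : Formula P G} (θ' : Chain G) :
      InCl Θ φ (Formula.A θ ψ) → θ' ∈ Θ → InCl Θ φ (Formula.C θ' (Formula.A θ ψ))
  | CnA {θ : Chain G} {ψ : Formula P G} (θ' : Chain G) :
      InCl Θ φ (Formula.A θ ψ) → θ' ∈ Θ →
      InCl Θ φ (Formula.C θ' (Formula.neg (Formula.A θ ψ)))
  | boxAtom {θ : Chain G} {ψ : Formula P G} {p : P} :
      InCl Θ φ (Formula.A θ ψ) → InCl Θ φ (Formula.atom p) →
      InCl Θ φ (Formula.box θ (Formula.atom p))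
  | Asub {θ : Chain G} {ψ χ : Formula P G} :
      InCl Θ φ (Formula.A θ ψ) → Subf χ ψ → InCl Θ φ (Formula.A θ χ)
  | Achain {θ : Chain G} {ψ : Formula P G} (θ' : Chain G) :
      InCl Θ φ (Formula.A θ ψ) → θ' ∈ Θ → InCl Θ φ (Formula.A θ' ψ)
  | KK {i : G} {ψ : Formula P G} :
      Subf (Formula.K i ψ) φ → InCl Θ φ (Formula.K i (Formula.K i ψ))
  | KnK {i : G} {ψ : Formula P G} :
      Subf (Formula.K i ψ) φ → InCl Θ φ (Formula.K i (Formula.neg (Formula.K i ψ)))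
  | boxbox {θ : Chain G} {ψ : Formula P G} :
      Subf (Formula.box θ ψ) φ → InCl Θ φ (Formula.box θ (Formula.box θ ψ))
  | boxnbox {θ : Chain G} {ψ : Formula P G} :
      Subf (Formula.box θ ψ) φ → InCl Θ φ (Formula.box θ (Formula.neg (Formula.box θ ψ)))
  | CboxKC {θ : Chain G} {ψ : Formula P G} :
      InCl Θ φ (Formula.C θ ψ) →
      InCl Θ φ (Formula.box θ (Formula.K (Chain.last θ) (Formula.C θ ψ)))
  | KC1 {i : G} {θ : Chain G} {ψ : Formula P G} :
      InCl Θ φ (Formula.K i (Formula.C θ ψ)) →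
      InCl Θ φ (Formula.K i (Formula.K i (Formula.C θ ψ)))
  | KC2 {i : G} {θ : Chain G} {ψ : Formula P G} :
      InCl Θ φ (Formula.K i (Formula.C θ ψ)) →
      InCl Θ φ (Formula.K i (Formula.neg (Formula.K i (Formula.C θ ψ))))
  | boxKC1 {θ : Chain G} {i : G} {ψ : Formula P G} :
      InCl Θ φ (Formula.box θ (Formula.K i (Formula.C θ ψ))) →
      InCl Θ φ (Formula.box θ (Formula.box θ (Formula.K i (Formula.C θ ψ))))
  | boxKC2 {θ : Chain G} {i : G} {ψ : Formula P G} :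
      InCl Θ φ (Formula.box θ (Formula.K i (Formula.C θ ψ))) →
      InCl Θ φ (Formula.box θ (Formula.neg (Formula.box θ (Formula.K i (Formula.C θ ψ)))))
  | EA {θ : Chain G} {ψ : Formula P G} : InCl Θ φ (Formula.E θ ψ) → InCl Θ φ (Formula.A θ ψ)
  | EC {θ : Chain G} {ψ : Formula P G} : InCl Θ φ (Formula.E θ ψ) → InCl Θ φ (Formula.C θ ψ)

/-- The closure cl(φ) as a set of formulas. -/
def cl (Θ : Set (Chain G)) (φ : Formula P G) : Set (Formula P G) := {ψ | InCl Θ φ ψ}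

/-- (Γ,Δ) ∈ (∼_i)*: {χ | I_iχ ∈ Γ} ⊆ Δ. -/
def simStar (i : G) (Γ Δ : Set (Formula P G)) : Prop := ∀ χ, Formula.K i χ ∈ Γ → χ ∈ Δ

/-- (Γ,Δ) ∈ (≈_θ)*: {χ | [≈]_θχ ∈ Γ} ⊆ Δ. -/
def boxStar (θ : Chain G) (Γ Δ : Set (Formula P G)) : Prop :=
  ∀ χ, Formula.box θ χ ∈ Γ → χ ∈ Δ

/-- The union over i ∈ G and θ ∈ Θ of the compositions (∼_i)* ∘ (≈_θ)* on
maximal consistent sets in Φ. -/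
def baseRel (Θ : Set (Chain G)) (Φ : Set (Formula P G)) (X Y : Set (Formula P G)) : Prop :=
  ∃ i : G, ∃ θ ∈ Θ, ∃ U, MCSIn Θ Φ U ∧ boxStar θ X U ∧ simStar i U Y

/-- The domain W*_Λ of the divided model M*_Λ. -/
def WL (Θ : Set (Chain G)) (Φ Λ : Set (Formula P G)) : Set (Set (Formula P G)) :=
  {Γ | MCSIn Θ Φ Γ ∧ Relation.TransGen (baseRel Θ Φ) Λ Γ}

/-- One step of a (C_θ)_Λ-path: the composition (∼_i)*_Λ ∘ (≈_θ)*_Λ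
(i the last agent of θ) restricted to W*_Λ. -/
def stepL (Θ : Set (Chain G)) (Φ Λ : Set (Formula P G)) (θ : Chain G)
    (X Y : Set (Formula P G)) : Prop :=
  X ∈ WL Θ Φ Λ ∧ Y ∈ WL Θ Φ Λ ∧
    ∃ U ∈ WL Θ Φ Λ, boxStar θ X U ∧ simStar (Chain.last θ) U Y

/-- The divided model M*_Λ (as raw model data), with relations (∼_i)*_Λ,
awareness sets (𝒜_θ)*_Λ and valuation V*_Λ. -/
def dividedModel (Θ : Set (Chain G)) (Φ Λ : Set (Formula P G)) : RawModel P G where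
  W := {Γ : Set (Formula P G) // Γ ∈ WL Θ Φ Λ}
  sim i x y := simStar i x.val y.val
  V p := {x | Formula.atom p ∈ x.val}
  Aw θ := {p | ∀ Γ ∈ WL Θ Φ Λ, Formula.A θ (Formula.atom p) ∈ Γ}

/-! ### Auxiliary material for the finiteness of the closure -/

section ClosureFiniteAux

variable {P G : Type}

theorem subf_trans' {b c : Formula P G} (h2 : Subf b c) :
    ∀ {a : Formula P G}, Subf a b → Subf a c := by
  induction h2 with
  | refl => exact fun h => h
  | neg _ ih => exact fun h => .neg (ih h)
  | andL _ ih => exact fun h => .andL (ih h)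
  | andR _ ih => exact fun h => .andR (ih h)
  | K _ ih => exact fun h => .K (ih h)
  | box _ ih => exact fun h => .box (ih h)
  | C _ ih => exact fun h => .C (ih h)
  | A _ ih => exact fun h => .A (ih h)
  | E _ ih => exact fun h => .E (ih h)

theorem wf_of_subf {Θ : Set (Chain G)} {b c : Formula P G} (h2 : Subf b c) :
    WF Θ c → WF Θ b := by
  induction h2 with
  | refl => exact id
  | neg _ ih => exact fun h => ih h
  | andL _ ih => exact fun h => ih h.1
  | andR _ ih => exact fun h => ih h.2
  | K _ ih => exact fun h => ih h
  | box _ ih => exact fun h => ih h.2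
  | C _ ih => exact fun h => ih h.2
  | A _ ih => exact fun h => ih h.2.1
  | E _ ih => exact fun h => ih h.2.1

/-- The list of subformulas. -/
def subfList : Formula P G → List (Formula P G)
  | .atom p => [.atom p]
  | .neg ψ => .neg ψ :: subfList ψ
  | .and ψ χ => .and ψ χ :: (subfList ψ ++ subfList χ)
  | .K i ψ => .K i ψ :: subfList ψ
  | .box θ ψ => .box θ ψ :: subfList ψ
  | .C θ ψ => .C θ ψ :: subfList ψ
  | .A θ ψ => .A θ ψ :: subfList ψ
  | .E θ ψ => .E θ ψ :: subfList ψ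

theorem self_mem_subfList (φ : Formula P G) : φ ∈ subfList φ := by
  cases φ <;> simp [subfList]

theorem mem_subfList {χ ψ : Formula P G} (h : Subf χ ψ) : χ ∈ subfList ψ := by
  induction h with
  | refl => exact self_mem_subfList _
  | neg _ ih => exact List.mem_cons_of_mem _ ih
  | andL _ ih => exact List.mem_cons_of_mem _ (List.mem_append_left _ ih)
  | andR _ ih => exact List.mem_cons_of_mem _ (List.mem_append_right _ ih)
  | K _ ih => exact List.mem_cons_of_mem _ ih
  | box _ ih => exact List.mem_cons_of_mem _ ih
  | C _ ih => exact List.mem_cons_of_mem _ ih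
  | A _ ih => exact List.mem_cons_of_mem _ ih
  | E _ ih => exact List.mem_cons_of_mem _ ih

/-- The set of subformulas of φ. -/
def SS (φ : Formula P G) : Set (Formula P G) := {χ | Subf χ φ}

theorem SS_finite (φ : Formula P G) : (SS φ).Finite :=
  Set.Finite.subset (subfList φ).finite_toSet (fun _ h => mem_subfList h)

/-- Core formulas: subformulas of φ, awareness formulas over them, and their negations. -/
def Core (Θ : Set (Chain G)) (S : Set (Formula P G)) (c : Formula P G) : Prop :=
  c ∈ S ∨ (∃ θ ∈ Θ, ∃ ψ ∈ S, c = .A θ ψ) ∨ (∃ θ ∈ Θ, ∃ ψ ∈ S, c = .neg (.A θ ψ))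

/-- A finite over-approximation of the closure (up to one outer negation). -/
inductive InF (Θ : Set (Chain G)) (S : Set (Formula P G)) : Formula P G → Prop
  | core {c} : Core Θ S c → InF Θ S c
  | Cc {θ c} : θ ∈ Θ → Core Θ S c → InF Θ S (.C θ c)
  | KC {i θ c} : θ ∈ Θ → Core Θ S c → InF Θ S (.K i (.C θ c))
  | nKC {i θ c} : θ ∈ Θ → Core Θ S c → InF Θ S (.neg (.K i (.C θ c)))
  | KKC {i θ c} : θ ∈ Θ → Core Θ S c → InF Θ S (.K i (.K i (.C θ c)))
  | KnKC {i θ c} : θ ∈ Θ → Core Θ S c → InF Θ S (.K i (.neg (.K i (.C θ c))))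
  | BKC {i θ c} : θ ∈ Θ → Core Θ S c → InF Θ S (.box θ (.K i (.C θ c)))
  | nBKC {i θ c} : θ ∈ Θ → Core Θ S c → InF Θ S (.neg (.box θ (.K i (.C θ c))))
  | BBKC {i θ c} : θ ∈ Θ → Core Θ S c → InF Θ S (.box θ (.box θ (.K i (.C θ c))))
  | BnBKC {i θ c} : θ ∈ Θ → Core Θ S c → InF Θ S (.box θ (.neg (.box θ (.K i (.C θ c)))))
  | Bc {θ c} : θ ∈ Θ → Core Θ S c → InF Θ S (.box θ c)
  | nBc {θ c} : θ ∈ Θ → Core Θ S c → InF Θ S (.neg (.box θ c))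
  | Kc {i c} : Core Θ S c → InF Θ S (.K i c)
  | nKc {i c} : Core Θ S c → InF Θ S (.neg (.K i c))
  | KKc {i c} : Core Θ S c → InF Θ S (.K i (.K i c))
  | KnKc {i c} : Core Θ S c → InF Θ S (.K i (.neg (.K i c)))
  | BBc {θ c} : θ ∈ Θ → Core Θ S c → InF Θ S (.box θ (.box θ c))
  | BnBc {θ c} : θ ∈ Θ → Core Θ S c → InF Θ S (.box θ (.neg (.box θ c)))

section SubfClosed

variable {Θ : Set (Chain G)} {S : Set (Formula P G)}
variable (hS : ∀ {a b : Formula P G}, Subf a b → b ∈ S → a ∈ S)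
include hS

theorem Core_subf {c χ : Formula P G} (hc : Core Θ S c) (h : Subf χ c) : Core Θ S χ := by
  rcases hc with hc | ⟨θ, hθ, ψ, hψ, rfl⟩ | ⟨θ, hθ, ψ, hψ, rfl⟩
  · exact Or.inl (hS h hc)
  · cases h with
    | refl => exact Or.inr (Or.inl ⟨θ, hθ, ψ, hψ, rfl⟩)
    | A h => exact Or.inl (hS h hψ)
  · cases h with
    | refl => exact Or.inr (Or.inr ⟨θ, hθ, ψ, hψ, rfl⟩)
    | neg h =>
      cases h with
      | refl => exact Or.inr (Or.inl ⟨θ, hθ, ψ, hψ, rfl⟩)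
      | A h => exact Or.inl (hS h hψ)

theorem subf_Cc {θ c χ} (hθ : θ ∈ Θ) (hc : Core Θ S c)
    (h : Subf χ (.C θ c)) : InF Θ S χ := by
  cases h with
  | refl => exact .Cc hθ hc
  | C h => exact .core (Core_subf hS hc h)

theorem subf_KC {i θ c χ} (hθ : θ ∈ Θ) (hc : Core Θ S c)
    (h : Subf χ (.K i (.C θ c))) : InF Θ S χ := by
  cases h with
  | refl => exact .KC hθ hc
  | K h => exact subf_Cc hS hθ hc h

theorem subf_nKC {i θ c χ} (hθ : θ ∈ Θ) (hc : Core Θ S c)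
    (h : Subf χ (.neg (.K i (.C θ c)))) : InF Θ S χ := by
  cases h with
  | refl => exact .nKC hθ hc
  | neg h => exact subf_KC hS hθ hc h

theorem subf_BKC {i θ c χ} (hθ : θ ∈ Θ) (hc : Core Θ S c)
    (h : Subf χ (.box θ (.K i (.C θ c)))) : InF Θ S χ := by
  cases h with
  | refl => exact .BKC hθ hc
  | box h => exact subf_KC hS hθ hc h

theorem subf_nBKC {i θ c χ} (hθ : θ ∈ Θ) (hc : Core Θ S c)
    (h : Subf χ (.neg (.box θ (.K i (.C θ c))))) : InF Θ S χ := by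
  cases h with
  | refl => exact .nBKC hθ hc
  | neg h => exact subf_BKC hS hθ hc h

theorem subf_KKC {i θ c χ} (hθ : θ ∈ Θ) (hc : Core Θ S c)
    (h : Subf χ (.K i (.K i (.C θ c)))) : InF Θ S χ := by
  cases h with
  | refl => exact .KKC hθ hc
  | K h => exact subf_KC hS hθ hc h

theorem subf_KnKC {i θ c χ} (hθ : θ ∈ Θ) (hc : Core Θ S c)
    (h : Subf χ (.K i (.neg (.K i (.C θ c))))) : InF Θ S χ := by
  cases h with
  | refl => exact .KnKC hθ hc
  | K h => exact subf_nKC hS hθ hc h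

theorem subf_BBKC {i θ c χ} (hθ : θ ∈ Θ) (hc : Core Θ S c)
    (h : Subf χ (.box θ (.box θ (.K i (.C θ c))))) : InF Θ S χ := by
  cases h with
  | refl => exact .BBKC hθ hc
  | box h => exact subf_BKC hS hθ hc h

theorem subf_BnBKC {i θ c χ} (hθ : θ ∈ Θ) (hc : Core Θ S c)
    (h : Subf χ (.box θ (.neg (.box θ (.K i (.C θ c)))))) : InF Θ S χ := by
  cases h with
  | refl => exact .BnBKC hθ hc
  | box h => exact subf_nBKC hS hθ hc h

theorem subf_Kc {i c χ} (hc : Core Θ S c)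
    (h : Subf χ (.K i c)) : InF Θ S χ := by
  cases h with
  | refl => exact .Kc hc
  | K h => exact .core (Core_subf hS hc h)

theorem subf_nKc {i c χ} (hc : Core Θ S c)
    (h : Subf χ (.neg (.K i c))) : InF Θ S χ := by
  cases h with
  | refl => exact .nKc hc
  | neg h => exact subf_Kc hS hc h

theorem subf_KKc {i c χ} (hc : Core Θ S c)
    (h : Subf χ (.K i (.K i c))) : InF Θ S χ := by
  cases h with
  | refl => exact .KKc hc
  | K h => exact subf_Kc hS hc h

theorem subf_KnKc {i c χ} (hc : Core Θ S c)
    (h : Subf χ (.K i (.neg (.K i c)))) : InF Θ S χ := by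
  cases h with
  | refl => exact .KnKc hc
  | K h => exact subf_nKc hS hc h

theorem subf_Bc {θ c χ} (hθ : θ ∈ Θ) (hc : Core Θ S c)
    (h : Subf χ (.box θ c)) : InF Θ S χ := by
  cases h with
  | refl => exact .Bc hθ hc
  | box h => exact .core (Core_subf hS hc h)

theorem subf_nBc {θ c χ} (hθ : θ ∈ Θ) (hc : Core Θ S c)
    (h : Subf χ (.neg (.box θ c))) : InF Θ S χ := by
  cases h with
  | refl => exact .nBc hθ hc
  | neg h => exact subf_Bc hS hθ hc h

theorem subf_BBc {θ c χ} (hθ : θ ∈ Θ) (hc : Core Θ S c)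
    (h : Subf χ (.box θ (.box θ c))) : InF Θ S χ := by
  cases h with
  | refl => exact .BBc hθ hc
  | box h => exact subf_Bc hS hθ hc h

theorem subf_BnBc {θ c χ} (hθ : θ ∈ Θ) (hc : Core Θ S c)
    (h : Subf χ (.box θ (.neg (.box θ c)))) : InF Θ S χ := by
  cases h with
  | refl => exact .BnBc hθ hc
  | box h => exact subf_nBc hS hθ hc h

theorem InF_subf {ψ χ} (h : InF Θ S ψ) (hsub : Subf χ ψ) : InF Θ S χ := by
  cases h with
  | core hc => exact .core (Core_subf hS hc hsub)
  | Cc hθ hc => exact subf_Cc hS hθ hc hsub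
  | KC hθ hc => exact subf_KC hS hθ hc hsub
  | nKC hθ hc => exact subf_nKC hS hθ hc hsub
  | KKC hθ hc => exact subf_KKC hS hθ hc hsub
  | KnKC hθ hc => exact subf_KnKC hS hθ hc hsub
  | BKC hθ hc => exact subf_BKC hS hθ hc hsub
  | nBKC hθ hc => exact subf_nBKC hS hθ hc hsub
  | BBKC hθ hc => exact subf_BBKC hS hθ hc hsub
  | BnBKC hθ hc => exact subf_BnBKC hS hθ hc hsub
  | Bc hθ hc => exact subf_Bc hS hθ hc hsub
  | nBc hθ hc => exact subf_nBc hS hθ hc hsub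
  | Kc hc => exact subf_Kc hS hc hsub
  | nKc hc => exact subf_nKc hS hc hsub
  | KKc hc => exact subf_KKc hS hc hsub
  | KnKc hc => exact subf_KnKc hS hc hsub
  | BBc hθ hc => exact subf_BBc hS hθ hc hsub
  | BnBc hθ hc => exact subf_BnBc hS hθ hc hsub

end SubfClosed

/-- The over-approximating set: `InF` together with single outer negations. -/
def FF (Θ : Set (Chain G)) (S : Set (Formula P G)) : Set (Formula P G) :=
  {x | InF Θ S x} ∪ Formula.neg '' {x | InF Θ S x}

end ClosureFiniteAux

section ClosureFiniteAux2

variable {P G : Type}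

section Inv

variable {Θ : Set (Chain G)} {φ : Formula P G} (hwf : WF Θ φ)
include hwf

theorem invA {θ : Chain G} {ψ : Formula P G}
    (h : (Formula.A θ ψ : Formula P G) ∈ FF Θ (SS φ)) : θ ∈ Θ ∧ ψ ∈ SS φ := by
  rcases h with h | ⟨y, _, heq⟩
  · cases h with
    | core hc =>
      rcases hc with hc | ⟨θ', hθ', ψ', hψ', heq⟩ | ⟨θ', hθ', ψ', hψ', heq⟩
      · exact ⟨(wf_of_subf hc hwf).1, subf_trans' hc (Subf.A (Subf.refl _))⟩
      · injection heq with h1 h2; subst h1; subst h2; exact ⟨hθ', hψ'⟩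
      · exact nomatch heq
  · exact nomatch heq

omit hwf in
theorem invAtom {p : P}
    (h : (Formula.atom p : Formula P G) ∈ FF Θ (SS φ)) : (Formula.atom p : Formula P G) ∈ SS φ := by
  rcases h with h | ⟨y, _, heq⟩
  · cases h with
    | core hc =>
      rcases hc with hc | ⟨θ', hθ', ψ', hψ', heq⟩ | ⟨θ', hθ', ψ', hψ', heq⟩
      · exact hc
      · exact nomatch heq
      · exact nomatch heq
  · exact nomatch heq

theorem invE {θ : Chain G} {ψ : Formula P G}
    (h : (Formula.E θ ψ : Formula P G) ∈ FF Θ (SS φ)) : θ ∈ Θ ∧ ψ ∈ SS φ := by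
  rcases h with h | ⟨y, _, heq⟩
  · cases h with
    | core hc =>
      rcases hc with hc | ⟨θ', hθ', ψ', hψ', heq⟩ | ⟨θ', hθ', ψ', hψ', heq⟩
      · exact ⟨(wf_of_subf hc hwf).1, subf_trans' hc (Subf.E (Subf.refl _))⟩
      · exact nomatch heq
      · exact nomatch heq
  · exact nomatch heq

theorem invC {θ : Chain G} {ψ : Formula P G}
    (h : (Formula.C θ ψ : Formula P G) ∈ FF Θ (SS φ)) : θ ∈ Θ ∧ Core Θ (SS φ) ψ := by
  rcases h with h | ⟨y, _, heq⟩
  · cases h with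
    | core hc =>
      rcases hc with hc | ⟨θ', hθ', ψ', hψ', heq⟩ | ⟨θ', hθ', ψ', hψ', heq⟩
      · exact ⟨(wf_of_subf hc hwf).1, Or.inl (subf_trans' hc (Subf.C (Subf.refl _)))⟩
      · exact nomatch heq
      · exact nomatch heq
    | Cc hθ hc => exact ⟨hθ, hc⟩
  · exact nomatch heq

theorem invKC {i : G} {θ : Chain G} {ψ : Formula P G}
    (h : (Formula.K i (Formula.C θ ψ) : Formula P G) ∈ FF Θ (SS φ)) :
    θ ∈ Θ ∧ Core Θ (SS φ) ψ := by
  rcases h with h | ⟨y, _, heq⟩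
  · cases h with
    | core hc =>
      rcases hc with hc | ⟨θ', hθ', ψ', hψ', heq⟩ | ⟨θ', hθ', ψ', hψ', heq⟩
      · have hc' : (Formula.C θ ψ : Formula P G) ∈ SS φ :=
          subf_trans' hc (Subf.K (Subf.refl _))
        exact ⟨(wf_of_subf hc' hwf).1, Or.inl (subf_trans' hc' (Subf.C (Subf.refl _)))⟩
      · exact nomatch heq
      · exact nomatch heq
    | KC hθ hc => exact ⟨hθ, hc⟩
    | Kc hc =>
      rcases hc with hc | ⟨θ', hθ', ψ', hψ', heq⟩ | ⟨θ', hθ', ψ', hψ', heq⟩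
      · exact ⟨(wf_of_subf hc hwf).1, Or.inl (subf_trans' hc (Subf.C (Subf.refl _)))⟩
      · exact nomatch heq
      · exact nomatch heq
  · exact nomatch heq

theorem invBKC {i : G} {θ : Chain G} {ψ : Formula P G}
    (h : (Formula.box θ (Formula.K i (Formula.C θ ψ)) : Formula P G) ∈ FF Θ (SS φ)) :
    θ ∈ Θ ∧ Core Θ (SS φ) ψ := by
  rcases h with h | ⟨y, _, heq⟩
  · cases h with
    | core hc =>
      rcases hc with hc | ⟨θ', hθ', ψ', hψ', heq⟩ | ⟨θ', hθ', ψ', hψ', heq⟩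
      · exact ⟨(wf_of_subf hc hwf).1,
          Or.inl (subf_trans' hc (Subf.box (Subf.K (Subf.C (Subf.refl _)))))⟩
      · exact nomatch heq
      · exact nomatch heq
    | BKC hθ hc => exact ⟨hθ, hc⟩
    | Bc hθ hc =>
      rcases hc with hc | ⟨θ', hθ', ψ', hψ', heq⟩ | ⟨θ', hθ', ψ', hψ', heq⟩
      · exact ⟨hθ, Or.inl (subf_trans' hc (Subf.K (Subf.C (Subf.refl _))))⟩
      · exact nomatch heq
      · exact nomatch heq
  · exact nomatch heq

end Inv

theorem InCl_sub_FF {Θ : Set (Chain G)} {φ : Formula P G} (hwf : WF Θ φ)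
    {ψ : Formula P G} (h : InCl Θ φ ψ) : ψ ∈ FF Θ (SS φ) := by
  have hS : ∀ {a b : Formula P G}, Subf a b → b ∈ SS φ → a ∈ SS φ :=
    fun h hb => subf_trans' hb h
  induction h with
  | self => exact Or.inl (.core (Or.inl (Subf.refl φ)))
  | sub _ hsub ih =>
    rcases ih with ih | ⟨y, hy, rfl⟩
    · exact Or.inl (InF_subf hS ih hsub)
    · cases hsub with
      | refl => exact Or.inr ⟨y, hy, rfl⟩
      | neg h => exact Or.inl (InF_subf hS hy h)
  | neg _ hneg ih =>
    rcases ih with ih | ⟨y, hy, rfl⟩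
    · exact Or.inr ⟨_, ih, rfl⟩
    · exact absurd trivial hneg
  | CA θ' _ hθ' ih =>
    obtain ⟨hθ, hψ⟩ := invA hwf ih
    exact Or.inl (.Cc hθ' (Or.inr (Or.inl ⟨_, hθ, _, hψ, rfl⟩)))
  | CnA θ' _ hθ' ih =>
    obtain ⟨hθ, hψ⟩ := invA hwf ih
    exact Or.inl (.Cc hθ' (Or.inr (Or.inr ⟨_, hθ, _, hψ, rfl⟩)))
  | boxAtom _ _ ihA ihp =>
    obtain ⟨hθ, _⟩ := invA hwf ihA
    exact Or.inl (.Bc hθ (Or.inl (invAtom ihp)))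
  | Asub _ hsub ih =>
    obtain ⟨hθ, hψ⟩ := invA hwf ih
    exact Or.inl (.core (Or.inr (Or.inl ⟨_, hθ, _, hS hsub hψ, rfl⟩)))
  | Achain θ' _ hθ' ih =>
    obtain ⟨_, hψ⟩ := invA hwf ih
    exact Or.inl (.core (Or.inr (Or.inl ⟨_, hθ', _, hψ, rfl⟩)))
  | KK hsub =>
    exact Or.inl (.KKc (Or.inl (subf_trans' hsub (Subf.K (Subf.refl _)))))
  | KnK hsub =>
    exact Or.inl (.KnKc (Or.inl (subf_trans' hsub (Subf.K (Subf.refl _)))))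
  | boxbox hsub =>
    exact Or.inl (.BBc (wf_of_subf hsub hwf).1
      (Or.inl (subf_trans' hsub (Subf.box (Subf.refl _)))))
  | boxnbox hsub =>
    exact Or.inl (.BnBc (wf_of_subf hsub hwf).1
      (Or.inl (subf_trans' hsub (Subf.box (Subf.refl _)))))
  | CboxKC _ ih =>
    obtain ⟨hθ, hc⟩ := invC hwf ih
    exact Or.inl (.BKC hθ hc)
  | KC1 _ ih =>
    obtain ⟨hθ, hc⟩ := invKC hwf ih
    exact Or.inl (.KKC hθ hc)
  | KC2 _ ih =>
    obtain ⟨hθ, hc⟩ := invKC hwf ih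
    exact Or.inl (.KnKC hθ hc)
  | boxKC1 _ ih =>
    obtain ⟨hθ, hc⟩ := invBKC hwf ih
    exact Or.inl (.BBKC hθ hc)
  | boxKC2 _ ih =>
    obtain ⟨hθ, hc⟩ := invBKC hwf ih
    exact Or.inl (.BnBKC hθ hc)
  | EA _ ih =>
    obtain ⟨hθ, hψ⟩ := invE hwf ih
    exact Or.inl (.core (Or.inr (Or.inl ⟨_, hθ, _, hψ, rfl⟩)))
  | EC _ ih =>
    obtain ⟨hθ, hψ⟩ := invE hwf ih
    exact Or.inl (.Cc hθ (Or.inl hψ))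

end ClosureFiniteAux2

section ClosureFiniteAux3

variable {P G : Type}

/-- The finite set of core formulas. -/
def CoreSet (Θ : Set (Chain G)) (S : Set (Formula P G)) : Set (Formula P G) :=
  S ∪ (fun q : Chain G × Formula P G => Formula.A q.1 q.2) '' (Θ ×ˢ S)
    ∪ (fun q : Chain G × Formula P G => Formula.neg (Formula.A q.1 q.2)) '' (Θ ×ˢ S)

theorem CoreSet_finite {Θ : Set (Chain G)} {S : Set (Formula P G)}
    (hΘ : Θ.Finite) (hS : S.Finite) : (CoreSet Θ S).Finite :=
  ((hS.union ((hΘ.prod hS).image _)).union ((hΘ.prod hS).image _))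

theorem Core_mem {Θ : Set (Chain G)} {S : Set (Formula P G)} {c : Formula P G}
    (h : Core Θ S c) : c ∈ CoreSet Θ S := by
  rcases h with h | ⟨θ, hθ, ψ, hψ, rfl⟩ | ⟨θ, hθ, ψ, hψ, rfl⟩
  · exact Or.inl (Or.inl h)
  · exact Or.inl (Or.inr ⟨(θ, ψ), ⟨hθ, hψ⟩, rfl⟩)
  · exact Or.inr ⟨(θ, ψ), ⟨hθ, hψ⟩, rfl⟩

/-- Uniform builder for all the shapes of formulas in `InF`. -/
def buildF : ℕ × Option G × Option (Chain G) × Formula P G → Formula P G :=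
  fun x =>
    match x with
    | (1, _, some θ, c) => .C θ c
    | (2, some i, some θ, c) => .K i (.C θ c)
    | (3, some i, some θ, c) => .neg (.K i (.C θ c))
    | (4, some i, some θ, c) => .K i (.K i (.C θ c))
    | (5, some i, some θ, c) => .K i (.neg (.K i (.C θ c)))
    | (6, some i, some θ, c) => .box θ (.K i (.C θ c))
    | (7, some i, some θ, c) => .neg (.box θ (.K i (.C θ c)))
    | (8, some i, some θ, c) => .box θ (.box θ (.K i (.C θ c)))
    | (9, some i, some θ, c) => .box θ (.neg (.box θ (.K i (.C θ c))))
    | (10, _, some θ, c) => .box θ c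
    | (11, _, some θ, c) => .neg (.box θ c)
    | (12, some i, _, c) => .K i c
    | (13, some i, _, c) => .neg (.K i c)
    | (14, some i, _, c) => .K i (.K i c)
    | (15, some i, _, c) => .K i (.neg (.K i c))
    | (16, _, some θ, c) => .box θ (.box θ c)
    | (17, _, some θ, c) => .box θ (.neg (.box θ c))
    | (_, _, _, c) => c

/-- The finite domain for `buildF`. -/
def domF (Θ : Set (Chain G)) (S : Set (Formula P G)) :
    Set (ℕ × Option G × Option (Chain G) × Formula P G) :=
  (Set.Iio 18) ×ˢ (insert none (Option.some '' (Set.univ : Set G))) ×ˢ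
    (insert none (Option.some '' Θ)) ×ˢ CoreSet Θ S

theorem domF_finite {Θ : Set (Chain G)} {S : Set (Formula P G)} [Finite G]
    (hΘ : Θ.Finite) (hS : S.Finite) : (domF Θ S).Finite :=
  (Set.finite_Iio 18).prod ((((Set.finite_univ).image Option.some).insert none).prod
    (((hΘ.image Option.some).insert none).prod (CoreSet_finite hΘ hS)))

theorem InF_mem_image {Θ : Set (Chain G)} {S : Set (Formula P G)} {x : Formula P G}
    (hx : InF Θ S x) : x ∈ buildF '' domF Θ S := by
  have hnone : (none : Option (Chain G)) ∈ insert none (Option.some '' Θ) :=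
    Set.mem_insert _ _
  have hsome : ∀ {θ : Chain G}, θ ∈ Θ →
      (some θ : Option (Chain G)) ∈ insert none (Option.some '' Θ) :=
    fun hθ => Set.mem_insert_of_mem _ ⟨_, hθ, rfl⟩
  cases hx with
  | core hc =>
    exact ⟨(0, none, none, _), ⟨by norm_num, by simp, hnone, Core_mem hc⟩, rfl⟩
  | Cc hθ hc =>
    exact ⟨(1, none, some _, _), ⟨by norm_num, by simp, hsome hθ, Core_mem hc⟩, rfl⟩
  | KC hθ hc =>
    exact ⟨(2, some _, some _, _), ⟨by norm_num, by simp, hsome hθ, Core_mem hc⟩, rfl⟩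
  | nKC hθ hc =>
    exact ⟨(3, some _, some _, _), ⟨by norm_num, by simp, hsome hθ, Core_mem hc⟩, rfl⟩
  | KKC hθ hc =>
    exact ⟨(4, some _, some _, _), ⟨by norm_num, by simp, hsome hθ, Core_mem hc⟩, rfl⟩
  | KnKC hθ hc =>
    exact ⟨(5, some _, some _, _), ⟨by norm_num, by simp, hsome hθ, Core_mem hc⟩, rfl⟩
  | BKC hθ hc =>
    exact ⟨(6, some _, some _, _), ⟨by norm_num, by simp, hsome hθ, Core_mem hc⟩, rfl⟩
  | nBKC hθ hc =>
    exact ⟨(7, some _, some _, _), ⟨by norm_num, by simp, hsome hθ, Core_mem hc⟩, rfl⟩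
  | BBKC hθ hc =>
    exact ⟨(8, some _, some _, _), ⟨by norm_num, by simp, hsome hθ, Core_mem hc⟩, rfl⟩
  | BnBKC hθ hc =>
    exact ⟨(9, some _, some _, _), ⟨by norm_num, by simp, hsome hθ, Core_mem hc⟩, rfl⟩
  | Bc hθ hc =>
    exact ⟨(10, none, some _, _), ⟨by norm_num, by simp, hsome hθ, Core_mem hc⟩, rfl⟩
  | nBc hθ hc =>
    exact ⟨(11, none, some _, _), ⟨by norm_num, by simp, hsome hθ, Core_mem hc⟩, rfl⟩
  | Kc hc =>
    exact ⟨(12, some _, none, _), ⟨by norm_num, by simp, hnone, Core_mem hc⟩, rfl⟩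
  | nKc hc =>
    exact ⟨(13, some _, none, _), ⟨by norm_num, by simp, hnone, Core_mem hc⟩, rfl⟩
  | KKc hc =>
    exact ⟨(14, some _, none, _), ⟨by norm_num, by simp, hnone, Core_mem hc⟩, rfl⟩
  | KnKc hc =>
    exact ⟨(15, some _, none, _), ⟨by norm_num, by simp, hnone, Core_mem hc⟩, rfl⟩
  | BBc hθ hc =>
    exact ⟨(16, none, some _, _), ⟨by norm_num, by simp, hsome hθ, Core_mem hc⟩, rfl⟩
  | BnBc hθ hc =>
    exact ⟨(17, none, some _, _), ⟨by norm_num, by simp, hsome hθ, Core_mem hc⟩, rfl⟩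

theorem FF_finite {Θ : Set (Chain G)} {S : Set (Formula P G)} [Finite G]
    (hΘ : Θ.Finite) (hS : S.Finite) : (FF Θ S).Finite := by
  have h1 : ({x | InF Θ S x} : Set (Formula P G)).Finite :=
    Set.Finite.subset ((domF_finite hΘ hS).image buildF) (fun x hx => InF_mem_image hx)
  exact h1.union (h1.image _)

end ClosureFiniteAux3

/-- Lemma 1: for every formula φ of the language, cl(φ) is finite. -/
theorem cl_finite {P G : Type} [Countable P] [Finite G]
    {Θ : Set (Chain G)} (hΘ : Θ.Finite) (φ : Formula P G) (hwf : WF Θ φ) :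
    (cl Θ φ).Finite :=
  Set.Finite.subset (FF_finite hΘ (SS_finite φ)) (fun _ h => InCl_sub_FF hwf h)

end ALPC
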